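/- arXiv:1008.1029 — 2 statements merged into one kernel-verified Lean document; each statement's English description precedes it below -/
import Mathlib

section
/- Let A be an m×m matrix over F₂ and G_A ≤ V(Q_A) the gauge group of its generalized Bacon–Shor code. Then the centralizer C(G_A) equals the linear span of the row operators R_1, …, R_m together with the column operators C_1, …, C_m. -/
set_option linter.unusedSectionVars false

open Finset Matrix

abbrev F2 : Type := ZMod 2

abbrev PauliSpace (Q : Type) := Q → F2 × F2

section Pauli

variable {Q : Type} [Fintype Q] [DecidableEq Q]

/-- Support of a Pauli vector. -/
def psupp (v : PauliSpace Q) : Finset Q := Finset.univ.filter (fun q => v q ≠ (0, 0))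

/-- Weight of a Pauli vector. -/
def pwt (v : PauliSpace Q) : ℕ := (psupp v).card

/-- The symplectic form. -/
def omegaF (u v : PauliSpace Q) : F2 :=
  ∑ q, ((u q).1 * (v q).2 + (u q).2 * (v q).1)

lemma omegaF_add_left (u v w : PauliSpace Q) :
    omegaF (u + v) w = omegaF u w + omegaF v w := by
  simp only [omegaF, Pi.add_apply, Prod.fst_add, Prod.snd_add, ← Finset.sum_add_distrib]
  exact Finset.sum_congr rfl (fun q _ => by ring)

lemma omegaF_smul_left (c : F2) (u w : PauliSpace Q) :
    omegaF (c • u) w = c * omegaF u w := by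
  simp only [omegaF, Pi.smul_apply, Prod.smul_fst, Prod.smul_snd, smul_eq_mul,
    Finset.mul_sum]
  exact Finset.sum_congr rfl (fun q _ => by ring)

/-- Centralizer of a subspace w.r.t. the symplectic form. -/
def pcent (G : Submodule F2 (PauliSpace Q)) : Submodule F2 (PauliSpace Q) where
  carrier := {v | ∀ g ∈ G, omegaF v g = 0}
  zero_mem' := by
    intro g _
    simp [omegaF]
  add_mem' := by
    intro a b ha hb g hg
    rw [omegaF_add_left, ha g hg, hb g hg, add_zero]
  smul_mem' := by
    intro c a ha g hg
    rw [omegaF_smul_left, ha g hg, mul_zero]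

/-- Stabilizer group of a gauge group. -/
def pstab (G : Submodule F2 (PauliSpace Q)) : Submodule F2 (PauliSpace Q) := G ⊓ pcent G

/-- Single-qubit Pauli X vector. -/
def Xop (c : Q) : PauliSpace Q := fun q => if q = c then (1, 0) else (0, 0)

/-- Single-qubit Pauli Z vector. -/
def Zop (c : Q) : PauliSpace Q := fun q => if q = c then (0, 1) else (0, 0)

/-- The set of weights of dressed logical operators; its infimum is the distance. -/
def distSet (G : Submodule F2 (PauliSpace Q)) : Set ℕ :=
  {w | ∃ v, v ∈ pcent (pstab G) ∧ v ∉ G ∧ pwt v = w}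

/-- Pauli vectors supported in `M`. -/
def PMod (M : Finset Q) : Submodule F2 (PauliSpace Q) where
  carrier := {v | ∀ q, q ∉ M → v q = 0}
  zero_mem' := by intro q _; rfl
  add_mem' := by
    intro a b ha hb q hq
    simp [Pi.add_apply, ha q hq, hb q hq]
  smul_mem' := by
    intro c a ha q hq
    simp [Pi.smul_apply, ha q hq]

/-- Projection onto the qubits in `M`. -/
def projL (M : Finset Q) : PauliSpace Q →ₗ[F2] PauliSpace Q where
  toFun v := fun q => if q ∈ M then v q else 0
  map_add' a b := by funext q; by_cases h : q ∈ M <;> simp [h]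
  map_smul' c a := by funext q; by_cases h : q ∈ M <;> simp [h]

/-- Number of independent dressed logical operators supported in `M`. -/
noncomputable def lM (G : Submodule F2 (PauliSpace Q)) (M : Finset Q) : ℕ :=
  Module.finrank F2 ↥(pcent ((pstab G).map (projL M)) ⊓ PMod M)
    - Module.finrank F2 ↥(G ⊓ PMod M)

/-- Number of independent bare logical operators supported in `M`. -/
noncomputable def lbareM (G : Submodule F2 (PauliSpace Q)) (M : Finset Q) : ℕ :=
  Module.finrank F2 ↥(pcent (G.map (projL M)) ⊓ PMod M)
    - Module.finrank F2 ↥(pstab G ⊓ PMod M)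

end Pauli

section Classical

variable {ι : Type} [Fintype ι] [DecidableEq ι]

/-- Hamming weight of a classical vector. -/
def hwt (v : ι → F2) : ℕ := (Finset.univ.filter (fun i => v i ≠ 0)).card

/-- Row space of a matrix. -/
def Crow (A : Matrix ι ι F2) : Submodule F2 (ι → F2) := Submodule.span F2 (Set.range A)

/-- Column space of a matrix. -/
def Ccol (A : Matrix ι ι F2) : Submodule F2 (ι → F2) := Submodule.span F2 (Set.range Aᵀ)

/-- Minimum distance of the row space. -/
noncomputable def drow (A : Matrix ι ι F2) : ℕ := sInf {w | ∃ v ∈ Crow A, v ≠ 0 ∧ hwt v = w}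

/-- Minimum distance of the column space. -/
noncomputable def dcol (A : Matrix ι ι F2) : ℕ := sInf {w | ∃ v ∈ Ccol A, v ≠ 0 ∧ hwt v = w}

/-- Number of nonzero entries of a matrix. -/
def nnz (A : Matrix ι ι F2) : ℕ :=
  (Finset.univ.filter (fun p : ι × ι => A p.1 p.2 ≠ 0)).card

end Classical

section BaconShor

variable {m : ℕ}

/-- Qubit set of the generalized Bacon-Shor code: cells with `A i j = 1`. -/
abbrev QA (A : Matrix (Fin m) (Fin m) F2) : Type := {c : Fin m × Fin m // A c.1 c.2 = 1}

/-- Generators of the gauge group. -/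
def gaugeSet (A : Matrix (Fin m) (Fin m) F2) : Set (PauliSpace (QA A)) :=
  {v | ∃ c c' : QA A, c ≠ c' ∧
    ((c.1.1 = c'.1.1 ∧ v = Xop c + Xop c') ∨ (c.1.2 = c'.1.2 ∧ v = Zop c + Zop c'))}

/-- Gauge group of the generalized Bacon-Shor code. -/
def gaugeBS (A : Matrix (Fin m) (Fin m) F2) : Submodule F2 (PauliSpace (QA A)) :=
  Submodule.span F2 (gaugeSet A)

/-- The row operator `R i`. -/
def Rop (A : Matrix (Fin m) (Fin m) F2) (i : Fin m) : PauliSpace (QA A) :=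
  ∑ c ∈ Finset.univ.filter (fun c : QA A => c.1.1 = i), Zop c

/-- The column operator `C j`. -/
def Cop (A : Matrix (Fin m) (Fin m) F2) (j : Fin m) : PauliSpace (QA A) :=
  ∑ c ∈ Finset.univ.filter (fun c : QA A => c.1.2 = j), Xop c

/-- X-type operator parameterized by a binary vector. -/
def PXop (A : Matrix (Fin m) (Fin m) F2) (x : Fin m → F2) : PauliSpace (QA A) :=
  ∑ j, x j • Cop A j

/-- Z-type operator parameterized by a binary vector. -/
def PZop (A : Matrix (Fin m) (Fin m) F2) (z : Fin m → F2) : PauliSpace (QA A) :=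
  ∑ i, z i • Rop A i

end BaconShor

/-- Binary entropy. -/
noncomputable def H2 (p : ℝ) : ℝ := -p * Real.logb 2 p - (1 - p) * Real.logb 2 (1 - p)
section Aux

variable {Q : Type} [Fintype Q] [DecidableEq Q]

lemma f2_add_eq_zero : ∀ a b : F2, a + b = 0 → a = b := by decide

lemma omegaF_comm (u v : PauliSpace Q) : omegaF u v = omegaF v u :=
  Finset.sum_congr rfl fun q _ => by ring

lemma omegaF_add_right (u v w : PauliSpace Q) :
    omegaF u (v + w) = omegaF u v + omegaF u w := by
  rw [omegaF_comm, omegaF_add_left, omegaF_comm v, omegaF_comm w]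

lemma omegaF_smul_right (c : F2) (u w : PauliSpace Q) :
    omegaF u (c • w) = c * omegaF u w := by
  rw [omegaF_comm, omegaF_smul_left, omegaF_comm]

lemma mem_pcent_span {S : Set (PauliSpace Q)} {v : PauliSpace Q}
    (h : ∀ s ∈ S, omegaF v s = 0) : v ∈ pcent (Submodule.span F2 S) := by
  intro g hg
  induction hg using Submodule.span_induction with
  | mem s hs => exact h s hs
  | zero => rw [omegaF_comm]; simp [omegaF]
  | add a b _ _ ha hb => rw [omegaF_add_right, ha, hb, add_zero]
  | smul c a _ ha => rw [omegaF_smul_right, ha, mul_zero]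

lemma omegaF_Xop (v : PauliSpace Q) (c : Q) : omegaF v (Xop c) = (v c).2 := by
  rw [omegaF, Finset.sum_eq_single c]
  · simp [Xop]
  · intro q _ hq; simp [Xop, hq]
  · intro h; exact absurd (Finset.mem_univ c) h

lemma omegaF_Zop (v : PauliSpace Q) (c : Q) : omegaF v (Zop c) = (v c).1 := by
  rw [omegaF, Finset.sum_eq_single c]
  · simp [Zop]
  · intro q _ hq; simp [Zop, hq]
  · intro h; exact absurd (Finset.mem_univ c) h

end Aux

section AuxBS

variable {m : ℕ}

lemma Rop_apply (A : Matrix (Fin m) (Fin m) F2) (i : Fin m) (q : QA A) :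
    Rop A i q = if q.1.1 = i then ((0 : F2), (1 : F2)) else 0 := by
  classical
  simp only [Rop, Finset.sum_apply, Zop, Prod.mk_zero_zero, Finset.sum_ite_eq,
    Finset.mem_filter, Finset.mem_univ, true_and]

lemma Cop_apply (A : Matrix (Fin m) (Fin m) F2) (j : Fin m) (q : QA A) :
    Cop A j q = if q.1.2 = j then ((1 : F2), (0 : F2)) else 0 := by
  classical
  simp only [Cop, Finset.sum_apply, Xop, Prod.mk_zero_zero, Finset.sum_ite_eq,
    Finset.mem_filter, Finset.mem_univ, true_and]

lemma PZop_apply (A : Matrix (Fin m) (Fin m) F2) (z : Fin m → F2) (q : QA A) :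
    PZop A z q = (0, z q.1.1) := by
  classical
  rw [PZop, Finset.sum_apply, Finset.sum_eq_single q.1.1]
  · simp [Pi.smul_apply, Rop_apply, Prod.smul_mk]
  · intro i _ hi
    simp [Pi.smul_apply, Rop_apply, hi, Ne.symm hi]
  · intro h; exact absurd (Finset.mem_univ _) h

lemma PXop_apply (A : Matrix (Fin m) (Fin m) F2) (x : Fin m → F2) (q : QA A) :
    PXop A x q = (x q.1.2, 0) := by
  classical
  rw [PXop, Finset.sum_apply, Finset.sum_eq_single q.1.2]
  · simp [Pi.smul_apply, Cop_apply, Prod.smul_mk]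
  · intro j _ hj
    simp [Pi.smul_apply, Cop_apply, hj, Ne.symm hj]
  · intro h; exact absurd (Finset.mem_univ _) h

end AuxBS

/-- The centralizer of the gauge group of a generalized Bacon-Shor code is spanned by
the row operators and the column operators. -/
theorem centralizer_eq_span_row_col {m : ℕ} (A : Matrix (Fin m) (Fin m) F2) :
    pcent (gaugeBS A) = Submodule.span F2 (Set.range (Rop A) ∪ Set.range (Cop A)) := by
  classical
  apply le_antisymm
  · intro v hv
    have hrow : ∀ c c' : QA A, c.1.1 = c'.1.1 → (v c).2 = (v c').2 := by
      intro c c' h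
      by_cases hcc : c = c'
      · rw [hcc]
      · have hg : Xop c + Xop c' ∈ gaugeBS A :=
          Submodule.subset_span ⟨c, c', hcc, Or.inl ⟨h, rfl⟩⟩
        have h0 := hv _ hg
        rw [omegaF_add_right, omegaF_Xop, omegaF_Xop] at h0
        exact f2_add_eq_zero _ _ h0
    have hcol : ∀ c c' : QA A, c.1.2 = c'.1.2 → (v c).1 = (v c').1 := by
      intro c c' h
      by_cases hcc : c = c'
      · rw [hcc]
      · have hg : Zop c + Zop c' ∈ gaugeBS A :=
          Submodule.subset_span ⟨c, c', hcc, Or.inr ⟨h, rfl⟩⟩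
        have h0 := hv _ hg
        rw [omegaF_add_right, omegaF_Zop, omegaF_Zop] at h0
        exact f2_add_eq_zero _ _ h0
    set z : Fin m → F2 :=
      fun i => if h : ∃ c : QA A, c.1.1 = i then (v h.choose).2 else 0 with hz_def
    set x : Fin m → F2 :=
      fun j => if h : ∃ c : QA A, c.1.2 = j then (v h.choose).1 else 0 with hx_def
    have hv_eq : v = PXop A x + PZop A z := by
      funext q
      rw [Pi.add_apply, PXop_apply, PZop_apply]
      have hz : z q.1.1 = (v q).2 := by
        have h : ∃ c : QA A, c.1.1 = q.1.1 := ⟨q, rfl⟩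
        rw [hz_def]
        simp only [dif_pos h]
        exact hrow h.choose q h.choose_spec
      have hx : x q.1.2 = (v q).1 := by
        have h : ∃ c : QA A, c.1.2 = q.1.2 := ⟨q, rfl⟩
        rw [hx_def]
        simp only [dif_pos h]
        exact hcol h.choose q h.choose_spec
      rw [hx, hz]
      refine Prod.ext ?_ ?_ <;> simp
    rw [hv_eq]
    apply Submodule.add_mem
    · exact Submodule.sum_mem _ fun j _ => Submodule.smul_mem _ _
        (Submodule.subset_span (Or.inr ⟨j, rfl⟩))
    · exact Submodule.sum_mem _ fun i _ => Submodule.smul_mem _ _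
        (Submodule.subset_span (Or.inl ⟨i, rfl⟩))
  · rw [Submodule.span_le]
    rintro g hg
    apply mem_pcent_span
    rintro s ⟨c, c', hcc, hs⟩
    rcases hg with ⟨i, rfl⟩ | ⟨j, rfl⟩ <;>
      rcases hs with ⟨hr, rfl⟩ | ⟨hc, rfl⟩
    · rw [omegaF_add_right, omegaF_Xop, omegaF_Xop, Rop_apply, Rop_apply, hr]
      split <;> decide
    · rw [omegaF_add_right, omegaF_Zop, omegaF_Zop, Rop_apply, Rop_apply]
      split <;> split <;> simp
    · rw [omegaF_add_right, omegaF_Xop, omegaF_Xop, Cop_apply, Cop_apply]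
      split <;> split <;> simp
    · rw [omegaF_add_right, omegaF_Zop, omegaF_Zop, Cop_apply, Cop_apply, hc]
      split <;> decide
end

section
/- Let A be an m×m matrix over F₂ and G_A the gauge group of its generalized Bacon–Shor code. Then for every x ∈ F₂^m, the minimum over g ∈ G_A of the weight |P^X(x) + g| equals the Hamming weight of the vector Ax; analogously, for every z ∈ F₂^m, the minimum over g ∈ G_A of |P^Z(z) + g| equals the Hamming weight of Aᵀz. -/
set_option linter.unusedSectionVars false

open Finset Matrix

section MDWAux

open Finset

variable {m : ℕ}

lemma F2_ne_zero {a : F2} (h : a ≠ 0) : a = 1 := by revert a; decide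
lemma F2_add_self (a : F2) : a + a = 0 := by revert a; decide
lemma F2_ite_eq_self (a : F2) : (if a = 1 then (1 : F2) else 0) = a := by revert a; decide

/-- Sum of X-components over a row: a gauge invariant. -/
def rowX (A : Matrix (Fin m) (Fin m) F2) (i : Fin m) : PauliSpace (QA A) →ₗ[F2] F2 where
  toFun v := ∑ c ∈ Finset.univ.filter (fun c : QA A => c.1.1 = i), (v c).1
  map_add' a b := by
    simp only [Pi.add_apply, Prod.fst_add]
    rw [Finset.sum_add_distrib]
  map_smul' r a := by
    simp only [Pi.smul_apply, Prod.smul_fst, smul_eq_mul, RingHom.id_apply]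
    rw [Finset.mul_sum]

/-- Sum of Z-components over a column: a gauge invariant. -/
def colZ (A : Matrix (Fin m) (Fin m) F2) (j : Fin m) : PauliSpace (QA A) →ₗ[F2] F2 where
  toFun v := ∑ c ∈ Finset.univ.filter (fun c : QA A => c.1.2 = j), (v c).2
  map_add' a b := by
    simp only [Pi.add_apply, Prod.snd_add]
    rw [Finset.sum_add_distrib]
  map_smul' r a := by
    simp only [Pi.smul_apply, Prod.smul_snd, smul_eq_mul, RingHom.id_apply]
    rw [Finset.mul_sum]

lemma rowX_apply (A : Matrix (Fin m) (Fin m) F2) (i : Fin m) (v : PauliSpace (QA A)) :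
    rowX A i v = ∑ c ∈ Finset.univ.filter (fun c : QA A => c.1.1 = i), (v c).1 := rfl

lemma colZ_apply (A : Matrix (Fin m) (Fin m) F2) (j : Fin m) (v : PauliSpace (QA A)) :
    colZ A j v = ∑ c ∈ Finset.univ.filter (fun c : QA A => c.1.2 = j), (v c).2 := rfl

lemma rowX_Xop (A : Matrix (Fin m) (Fin m) F2) (i : Fin m) (c : QA A) :
    rowX A i (Xop c) = if c.1.1 = i then 1 else 0 := by
  rw [rowX_apply]
  rw [Finset.sum_congr rfl (fun c' _ => show (Xop c c').1 = if c' = c then 1 else 0 by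
    simp [Xop]; split <;> simp)]
  rw [Finset.sum_ite_eq' _ c (fun _ => (1 : F2))]
  simp

lemma rowX_Zop (A : Matrix (Fin m) (Fin m) F2) (i : Fin m) (c : QA A) :
    rowX A i (Zop c) = 0 := by
  rw [rowX_apply]
  apply Finset.sum_eq_zero
  intro c' _
  simp [Zop]; split <;> simp

lemma colZ_Zop (A : Matrix (Fin m) (Fin m) F2) (j : Fin m) (c : QA A) :
    colZ A j (Zop c) = if c.1.2 = j then 1 else 0 := by
  rw [colZ_apply]
  rw [Finset.sum_congr rfl (fun c' _ => show (Zop c c').2 = if c' = c then 1 else 0 by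
    simp [Zop]; split <;> simp)]
  rw [Finset.sum_ite_eq' _ c (fun _ => (1 : F2))]
  simp

lemma colZ_Xop (A : Matrix (Fin m) (Fin m) F2) (j : Fin m) (c : QA A) :
    colZ A j (Xop c) = 0 := by
  rw [colZ_apply]
  apply Finset.sum_eq_zero
  intro c' _
  simp [Xop]; split <;> simp

lemma rowX_gauge (A : Matrix (Fin m) (Fin m) F2) (i : Fin m) {g : PauliSpace (QA A)}
    (hg : g ∈ gaugeBS A) : rowX A i g = 0 := by
  induction hg using Submodule.span_induction with
  | mem v hv =>
    obtain ⟨c, c', hne, h⟩ := hv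
    rcases h with ⟨hrow, rfl⟩ | ⟨hcol, rfl⟩
    · rw [map_add, rowX_Xop, rowX_Xop, hrow, F2_add_self]
    · rw [map_add, rowX_Zop, rowX_Zop, add_zero]
  | zero => simp
  | add x y _ _ hx hy => rw [map_add, hx, hy, add_zero]
  | smul a x _ hx => rw [_root_.map_smul, hx, smul_zero]

lemma colZ_gauge (A : Matrix (Fin m) (Fin m) F2) (j : Fin m) {g : PauliSpace (QA A)}
    (hg : g ∈ gaugeBS A) : colZ A j g = 0 := by
  induction hg using Submodule.span_induction with
  | mem v hv =>
    obtain ⟨c, c', hne, h⟩ := hv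
    rcases h with ⟨hrow, rfl⟩ | ⟨hcol, rfl⟩
    · rw [map_add, colZ_Xop, colZ_Xop, add_zero]
    · rw [map_add, colZ_Zop, colZ_Zop, hcol, F2_add_self]
  | zero => simp
  | add x y _ _ hx hy => rw [map_add, hx, hy, add_zero]
  | smul a x _ hx => rw [_root_.map_smul, hx, smul_zero]

lemma rowX_Cop (A : Matrix (Fin m) (Fin m) F2) (i j : Fin m) :
    rowX A i (Cop A j) = A i j := by
  rw [Cop, map_sum]
  simp only [rowX_Xop]
  by_cases hA : A i j = 1
  · rw [Finset.sum_eq_single_of_mem (⟨(i, j), hA⟩ : QA A)]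
    · simp [hA]
    · simp
    · intro c hc hne
      rw [if_neg]
      intro h
      apply hne
      apply Subtype.ext
      have hc2 := (Finset.mem_filter.mp hc).2
      exact Prod.ext h hc2
  · have hA0 : A i j = 0 := by
      rcases (show A i j = 0 ∨ A i j = 1 by revert hA; generalize A i j = a; revert a; decide)
        with h | h
      · exact h
      · exact absurd h hA
    rw [hA0]
    apply Finset.sum_eq_zero
    intro c hc
    rw [if_neg]
    intro h
    apply hA
    have hc2 := (Finset.mem_filter.mp hc).2
    have := c.2
    rw [h, hc2] at this
    exact this

lemma colZ_Rop (A : Matrix (Fin m) (Fin m) F2) (i j : Fin m) :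
    colZ A j (Rop A i) = A i j := by
  rw [Rop, map_sum]
  simp only [colZ_Zop]
  by_cases hA : A i j = 1
  · rw [Finset.sum_eq_single_of_mem (⟨(i, j), hA⟩ : QA A)]
    · simp [hA]
    · simp
    · intro c hc hne
      rw [if_neg]
      intro h
      apply hne
      apply Subtype.ext
      have hc2 := (Finset.mem_filter.mp hc).2
      exact Prod.ext hc2 h
  · have hA0 : A i j = 0 := by
      rcases (show A i j = 0 ∨ A i j = 1 by revert hA; generalize A i j = a; revert a; decide)
        with h | h
      · exact h
      · exact absurd h hA
    rw [hA0]
    apply Finset.sum_eq_zero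
    intro c hc
    rw [if_neg]
    intro h
    apply hA
    have hc2 := (Finset.mem_filter.mp hc).2
    have := c.2
    rw [hc2, h] at this
    exact this

lemma rowX_PXop (A : Matrix (Fin m) (Fin m) F2) (x : Fin m → F2) (i : Fin m) :
    rowX A i (PXop A x) = A.mulVec x i := by
  rw [PXop, map_sum]
  simp only [_root_.map_smul, rowX_Cop, smul_eq_mul]
  rw [Matrix.mulVec, dotProduct]
  exact Finset.sum_congr rfl (fun j _ => mul_comm _ _)

lemma colZ_PZop (A : Matrix (Fin m) (Fin m) F2) (z : Fin m → F2) (j : Fin m) :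
    colZ A j (PZop A z) = Aᵀ.mulVec z j := by
  rw [PZop, map_sum]
  simp only [_root_.map_smul, colZ_Rop, smul_eq_mul]
  rw [Matrix.mulVec, dotProduct]
  exact Finset.sum_congr rfl (fun i _ => by rw [Matrix.transpose_apply, mul_comm])

lemma PXop_snd (A : Matrix (Fin m) (Fin m) F2) (x : Fin m → F2) (c : QA A) :
    (PXop A x c).2 = 0 := by
  rw [PXop, Finset.sum_apply, Prod.snd_sum]
  apply Finset.sum_eq_zero
  intro j _
  rw [Pi.smul_apply, Prod.smul_snd, Cop, Finset.sum_apply, Prod.snd_sum]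
  rw [Finset.sum_eq_zero (fun c' _ => by simp [Xop]; split <;> simp)]
  simp

lemma PZop_fst (A : Matrix (Fin m) (Fin m) F2) (z : Fin m → F2) (c : QA A) :
    (PZop A z c).1 = 0 := by
  rw [PZop, Finset.sum_apply, Prod.fst_sum]
  apply Finset.sum_eq_zero
  intro i _
  rw [Pi.smul_apply, Prod.smul_fst, Rop, Finset.sum_apply, Prod.fst_sum]
  rw [Finset.sum_eq_zero (fun c' _ => by simp [Zop]; split <;> simp)]
  simp

lemma pairX_mem (A : Matrix (Fin m) (Fin m) F2) {c c' : QA A} (hne : c ≠ c')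
    (hrow : c.1.1 = c'.1.1) : Xop c + Xop c' ∈ gaugeBS A :=
  Submodule.subset_span ⟨c, c', hne, Or.inl ⟨hrow, rfl⟩⟩

lemma pairZ_mem (A : Matrix (Fin m) (Fin m) F2) {c c' : QA A} (hne : c ≠ c')
    (hcol : c.1.2 = c'.1.2) : Zop c + Zop c' ∈ gaugeBS A :=
  Submodule.subset_span ⟨c, c', hne, Or.inr ⟨hcol, rfl⟩⟩

lemma sum_Xpairs_mem (A : Matrix (Fin m) (Fin m) F2) (i : Fin m) :
    ∀ S : Finset (QA A), (∀ c ∈ S, c.1.1 = i) → Even S.card →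
      (∑ c ∈ S, Xop c) ∈ gaugeBS A := by
  intro S
  induction S using Finset.strongInduction with
  | _ S ih =>
    intro hrow heven
    rcases S.eq_empty_or_nonempty with rfl | ⟨c₁, hc₁⟩
    · simp only [Finset.sum_empty]
      exact (gaugeBS A).zero_mem
    · have h1 : 1 ≤ S.card := Finset.card_pos.mpr ⟨c₁, hc₁⟩
      obtain ⟨k, hk⟩ := heven
      have h2 : (S.erase c₁).Nonempty := by
        rw [← Finset.card_pos, Finset.card_erase_of_mem hc₁]
        omega
      obtain ⟨c₂, hc₂⟩ := h2
      have hc₂S : c₂ ∈ S := Finset.mem_of_mem_erase hc₂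
      have hne : c₂ ≠ c₁ := Finset.ne_of_mem_erase hc₂
      rw [← Finset.add_sum_erase _ _ hc₁, ← Finset.add_sum_erase _ _ hc₂, ← add_assoc]
      apply add_mem
      · exact pairX_mem A (Ne.symm hne) ((hrow c₁ hc₁).trans (hrow c₂ hc₂S).symm)
      · apply ih
        · exact Finset.ssubset_of_subset_of_ssubset
            (Finset.erase_subset _ _) (Finset.erase_ssubset hc₁)
        · intro c hc
          exact hrow c (Finset.mem_of_mem_erase (Finset.mem_of_mem_erase hc))
        · rw [Finset.card_erase_of_mem hc₂, Finset.card_erase_of_mem hc₁, hk]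
          exact ⟨k - 1, by omega⟩

lemma sum_Zpairs_mem (A : Matrix (Fin m) (Fin m) F2) (j : Fin m) :
    ∀ S : Finset (QA A), (∀ c ∈ S, c.1.2 = j) → Even S.card →
      (∑ c ∈ S, Zop c) ∈ gaugeBS A := by
  intro S
  induction S using Finset.strongInduction with
  | _ S ih =>
    intro hcol heven
    rcases S.eq_empty_or_nonempty with rfl | ⟨c₁, hc₁⟩
    · simp only [Finset.sum_empty]
      exact (gaugeBS A).zero_mem
    · have h1 : 1 ≤ S.card := Finset.card_pos.mpr ⟨c₁, hc₁⟩
      obtain ⟨k, hk⟩ := heven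
      have h2 : (S.erase c₁).Nonempty := by
        rw [← Finset.card_pos, Finset.card_erase_of_mem hc₁]
        omega
      obtain ⟨c₂, hc₂⟩ := h2
      have hc₂S : c₂ ∈ S := Finset.mem_of_mem_erase hc₂
      have hne : c₂ ≠ c₁ := Finset.ne_of_mem_erase hc₂
      rw [← Finset.add_sum_erase _ _ hc₁, ← Finset.add_sum_erase _ _ hc₂, ← add_assoc]
      apply add_mem
      · exact pairZ_mem A (Ne.symm hne) ((hcol c₁ hc₁).trans (hcol c₂ hc₂S).symm)
      · apply ih
        · exact Finset.ssubset_of_subset_of_ssubset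
            (Finset.erase_subset _ _) (Finset.erase_ssubset hc₁)
        · intro c hc
          exact hcol c (Finset.mem_of_mem_erase (Finset.mem_of_mem_erase hc))
        · rw [Finset.card_erase_of_mem hc₂, Finset.card_erase_of_mem hc₁, hk]
          exact ⟨k - 1, by omega⟩

lemma even_card_of_sum_zero {Q : Type} [Fintype Q] [DecidableEq Q] (S : Finset Q)
    (f : Q → F2) (hf : ∀ c ∈ S, f c ≠ 0) (h : ∑ c ∈ S, f c = 0) : Even S.card := by
  have h1 : ∑ c ∈ S, f c = (S.card : F2) := by
    rw [Finset.sum_congr rfl (fun c hc => F2_ne_zero (hf c hc))]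
    simp
  rw [h1] at h
  obtain ⟨k, hk⟩ := (ZMod.natCast_eq_zero_iff _ 2).mp h
  exact ⟨k, by omega⟩

lemma mem_gauge_of_X (A : Matrix (Fin m) (Fin m) F2) (v : PauliSpace (QA A))
    (hz : ∀ c, (v c).2 = 0) (hrow : ∀ i, rowX A i v = 0) : v ∈ gaugeBS A := by
  classical
  have hv : v = ∑ c ∈ Finset.univ.filter (fun c : QA A => (v c).1 ≠ 0), Xop c := by
    funext q
    rw [Finset.sum_apply]
    rw [Finset.sum_congr rfl (fun c _ => show Xop c q = if c = q then ((1:F2),(0:F2)) else 0 by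
      simp only [Xop]
      by_cases h : q = c
      · rw [if_pos h, if_pos h.symm]
      · rw [if_neg h, if_neg (fun hh => h hh.symm)]; rfl)]
    rw [Finset.sum_ite_eq' _ q (fun _ => ((1:F2),(0:F2)))]
    by_cases h : (v q).1 = 0
    · rw [if_neg (by simp [h])]
      exact Prod.ext h (hz q)
    · rw [if_pos (by simp [h])]
      exact Prod.ext (F2_ne_zero h) (hz q)
  rw [hv, ← Finset.sum_fiberwise _ (fun c : QA A => c.1.1) (fun c => Xop c)]
  apply Submodule.sum_mem
  intro i _
  apply sum_Xpairs_mem A i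
  · intro c hc
    exact (Finset.mem_filter.mp hc).2
  · apply even_card_of_sum_zero _ (fun c => (v c).1)
    · intro c hc
      exact (Finset.mem_filter.mp (Finset.mem_filter.mp hc).1).2
    · have heq : (∑ c ∈ (Finset.univ.filter (fun c : QA A => (v c).1 ≠ 0)).filter
          (fun c : QA A => c.1.1 = i), (v c).1) = rowX A i v := by
        rw [rowX_apply]
        apply Finset.sum_subset
        · intro c hc
          simp only [Finset.mem_filter, Finset.mem_univ, true_and] at hc ⊢
          exact hc.2
        · intro c hc hnc
          by_contra h
          apply hnc
          simp only [Finset.mem_filter, Finset.mem_univ, true_and] at hc ⊢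
          exact ⟨h, hc⟩
      rw [heq, hrow i]

lemma mem_gauge_of_Z (A : Matrix (Fin m) (Fin m) F2) (v : PauliSpace (QA A))
    (hx : ∀ c, (v c).1 = 0) (hcol : ∀ j, colZ A j v = 0) : v ∈ gaugeBS A := by
  classical
  have hv : v = ∑ c ∈ Finset.univ.filter (fun c : QA A => (v c).2 ≠ 0), Zop c := by
    funext q
    rw [Finset.sum_apply]
    rw [Finset.sum_congr rfl (fun c _ => show Zop c q = if c = q then ((0:F2),(1:F2)) else 0 by
      simp only [Zop]
      by_cases h : q = c
      · rw [if_pos h, if_pos h.symm]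
      · rw [if_neg h, if_neg (fun hh => h hh.symm)]; rfl)]
    rw [Finset.sum_ite_eq' _ q (fun _ => ((0:F2),(1:F2)))]
    by_cases h : (v q).2 = 0
    · rw [if_neg (by simp [h])]
      exact Prod.ext (hx q) h
    · rw [if_pos (by simp [h])]
      exact Prod.ext (hx q) (F2_ne_zero h)
  rw [hv, ← Finset.sum_fiberwise _ (fun c : QA A => c.1.2) (fun c => Zop c)]
  apply Submodule.sum_mem
  intro j _
  apply sum_Zpairs_mem A j
  · intro c hc
    exact (Finset.mem_filter.mp hc).2
  · apply even_card_of_sum_zero _ (fun c => (v c).2)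
    · intro c hc
      exact (Finset.mem_filter.mp (Finset.mem_filter.mp hc).1).2
    · have heq : (∑ c ∈ (Finset.univ.filter (fun c : QA A => (v c).2 ≠ 0)).filter
          (fun c : QA A => c.1.2 = j), (v c).2) = colZ A j v := by
        rw [colZ_apply]
        apply Finset.sum_subset
        · intro c hc
          simp only [Finset.mem_filter, Finset.mem_univ, true_and] at hc ⊢
          exact hc.2
        · intro c hc hnc
          by_contra h
          apply hnc
          simp only [Finset.mem_filter, Finset.mem_univ, true_and] at hc ⊢
          exact ⟨h, hc⟩
      rw [heq, hcol j]

lemma lower_X (A : Matrix (Fin m) (Fin m) F2) (x : Fin m → F2) {g : PauliSpace (QA A)}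
    (hg : g ∈ gaugeBS A) : hwt (A.mulVec x) ≤ pwt (PXop A x + g) := by
  classical
  have hrow : ∀ i, rowX A i (PXop A x + g) = A.mulVec x i := by
    intro i
    rw [map_add, rowX_gauge A i hg, add_zero, rowX_PXop]
  rw [hwt, pwt]
  apply Finset.card_le_card_of_surjOn (fun c : QA A => c.1.1)
  intro i hi
  have hi' : A.mulVec x i ≠ 0 := by
    simp only [Finset.coe_filter, Finset.mem_univ, true_and, Set.mem_setOf_eq] at hi
    exact hi
  have hne : (∑ c ∈ Finset.univ.filter (fun c : QA A => c.1.1 = i),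
      ((PXop A x + g) c).1) ≠ 0 := by
    rw [← rowX_apply, hrow]
    exact hi'
  obtain ⟨c, hc, hcne⟩ := Finset.exists_ne_zero_of_sum_ne_zero hne
  refine ⟨c, ?_, (Finset.mem_filter.mp hc).2⟩
  simp only [psupp, Finset.coe_filter, Finset.mem_univ, true_and, Set.mem_setOf_eq]
  intro h0
  rw [h0] at hcne
  exact hcne rfl

lemma lower_Z (A : Matrix (Fin m) (Fin m) F2) (z : Fin m → F2) {g : PauliSpace (QA A)}
    (hg : g ∈ gaugeBS A) : hwt (Aᵀ.mulVec z) ≤ pwt (PZop A z + g) := by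
  classical
  have hcol : ∀ j, colZ A j (PZop A z + g) = Aᵀ.mulVec z j := by
    intro j
    rw [map_add, colZ_gauge A j hg, add_zero, colZ_PZop]
  rw [hwt, pwt]
  apply Finset.card_le_card_of_surjOn (fun c : QA A => c.1.2)
  intro j hj
  have hj' : Aᵀ.mulVec z j ≠ 0 := by
    simp only [Finset.coe_filter, Finset.mem_univ, true_and, Set.mem_setOf_eq] at hj
    exact hj
  have hne : (∑ c ∈ Finset.univ.filter (fun c : QA A => c.1.2 = j),
      ((PZop A z + g) c).2) ≠ 0 := by
    rw [← colZ_apply, hcol]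
    exact hj'
  obtain ⟨c, hc, hcne⟩ := Finset.exists_ne_zero_of_sum_ne_zero hne
  refine ⟨c, ?_, (Finset.mem_filter.mp hc).2⟩
  simp only [psupp, Finset.coe_filter, Finset.mem_univ, true_and, Set.mem_setOf_eq]
  intro h0
  rw [h0] at hcne
  exact hcne rfl

lemma exists_witness_X (A : Matrix (Fin m) (Fin m) F2) (x : Fin m → F2) :
    ∃ g ∈ gaugeBS A, pwt (PXop A x + g) = hwt (A.mulVec x) := by
  classical
  have hsel : ∀ i : Fin m, ∃ j, A.mulVec x i ≠ 0 → A i j = 1 := by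
    intro i
    by_cases h : A.mulVec x i ≠ 0
    · rw [Matrix.mulVec, dotProduct] at h
      obtain ⟨j, _, hj⟩ := Finset.exists_ne_zero_of_sum_ne_zero h
      exact ⟨j, fun _ => F2_ne_zero (left_ne_zero_of_mul hj)⟩
    · exact ⟨i, fun h' => absurd h' h⟩
  choose J hJ using hsel
  set t : PauliSpace (QA A) :=
    fun c => if A.mulVec x c.1.1 ≠ 0 ∧ c.1.2 = J c.1.1 then ((1:F2),(0:F2)) else 0 with ht
  have htpos : ∀ c : QA A, A.mulVec x c.1.1 ≠ 0 ∧ c.1.2 = J c.1.1 →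
      t c = ((1:F2),(0:F2)) := fun c h => if_pos h
  have htneg : ∀ c : QA A, ¬(A.mulVec x c.1.1 ≠ 0 ∧ c.1.2 = J c.1.1) →
      t c = 0 := fun c h => if_neg h
  have ht2 : ∀ c, (t c).2 = 0 := by
    intro c
    by_cases h : A.mulVec x c.1.1 ≠ 0 ∧ c.1.2 = J c.1.1
    · rw [htpos c h]
    · rw [htneg c h]; rfl
  have hrowt : ∀ i, rowX A i t = A.mulVec x i := by
    intro i
    rw [rowX_apply]
    by_cases hi : A.mulVec x i ≠ 0
    · rw [Finset.sum_eq_single_of_mem (⟨(i, J i), hJ i hi⟩ : QA A)]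
      · rw [htpos _ ⟨hi, rfl⟩, F2_ne_zero hi]
      · simp
      · intro c hc hne
        have hc1 : c.1.1 = i := (Finset.mem_filter.mp hc).2
        rw [htneg c ?_]
        · rfl
        · rintro ⟨-, h2⟩
          apply hne
          apply Subtype.ext
          refine Prod.ext hc1 ?_
          rw [h2, hc1]
    · push_neg at hi
      rw [hi]
      apply Finset.sum_eq_zero
      intro c hc
      have hc1 : c.1.1 = i := (Finset.mem_filter.mp hc).2
      rw [htneg c ?_]
      · rfl
      · rintro ⟨h1, -⟩
        rw [hc1, hi] at h1
        exact h1 rfl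
  have hpwt : pwt t = hwt (A.mulVec x) := by
    rw [pwt, hwt, psupp]
    refine Finset.card_bij' (fun (c : QA A) _ => c.1.1)
      (fun i hi => (⟨(i, J i), hJ i (by simpa using hi)⟩ : QA A)) ?_ ?_ ?_ ?_
    · intro c hc
      simp only [Finset.mem_filter, Finset.mem_univ, true_and] at hc ⊢
      by_cases h : A.mulVec x c.1.1 ≠ 0 ∧ c.1.2 = J c.1.1
      · exact h.1
      · exact absurd (htneg c h) hc
    · intro i hi
      simp only [Finset.mem_filter, Finset.mem_univ, true_and] at hi ⊢
      rw [htpos _ ⟨hi, rfl⟩]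
      decide
    · intro c hc
      simp only [Finset.mem_filter, Finset.mem_univ, true_and] at hc
      by_cases h : A.mulVec x c.1.1 ≠ 0 ∧ c.1.2 = J c.1.1
      · apply Subtype.ext
        exact Prod.ext rfl h.2.symm
      · exact absurd (htneg c h) hc
    · intro i hi
      rfl
  refine ⟨t - PXop A x, ?_, ?_⟩
  · apply mem_gauge_of_X
    · intro c
      rw [Pi.sub_apply, Prod.snd_sub, ht2, PXop_snd, sub_zero]
    · intro i
      rw [map_sub, hrowt, rowX_PXop, sub_self]
  · have heq : PXop A x + (t - PXop A x) = t := by abel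
    rw [heq, hpwt]

lemma exists_witness_Z (A : Matrix (Fin m) (Fin m) F2) (z : Fin m → F2) :
    ∃ g ∈ gaugeBS A, pwt (PZop A z + g) = hwt (Aᵀ.mulVec z) := by
  classical
  have hsel : ∀ j : Fin m, ∃ i, Aᵀ.mulVec z j ≠ 0 → A i j = 1 := by
    intro j
    by_cases h : Aᵀ.mulVec z j ≠ 0
    · rw [Matrix.mulVec, dotProduct] at h
      obtain ⟨i, _, hi⟩ := Finset.exists_ne_zero_of_sum_ne_zero h
      exact ⟨i, fun _ => F2_ne_zero (left_ne_zero_of_mul hi)⟩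
    · exact ⟨j, fun h' => absurd h' h⟩
  choose I hI using hsel
  set t : PauliSpace (QA A) :=
    fun c => if Aᵀ.mulVec z c.1.2 ≠ 0 ∧ c.1.1 = I c.1.2 then ((0:F2),(1:F2)) else 0 with ht
  have htpos : ∀ c : QA A, Aᵀ.mulVec z c.1.2 ≠ 0 ∧ c.1.1 = I c.1.2 →
      t c = ((0:F2),(1:F2)) := fun c h => if_pos h
  have htneg : ∀ c : QA A, ¬(Aᵀ.mulVec z c.1.2 ≠ 0 ∧ c.1.1 = I c.1.2) →
      t c = 0 := fun c h => if_neg h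
  have ht1 : ∀ c, (t c).1 = 0 := by
    intro c
    by_cases h : Aᵀ.mulVec z c.1.2 ≠ 0 ∧ c.1.1 = I c.1.2
    · rw [htpos c h]
    · rw [htneg c h]; rfl
  have hcolt : ∀ j, colZ A j t = Aᵀ.mulVec z j := by
    intro j
    rw [colZ_apply]
    by_cases hj : Aᵀ.mulVec z j ≠ 0
    · rw [Finset.sum_eq_single_of_mem (⟨(I j, j), hI j hj⟩ : QA A)]
      · rw [htpos _ ⟨hj, rfl⟩, F2_ne_zero hj]
      · simp
      · intro c hc hne
        have hc2 : c.1.2 = j := (Finset.mem_filter.mp hc).2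
        rw [htneg c ?_]
        · rfl
        · rintro ⟨-, h1⟩
          apply hne
          apply Subtype.ext
          refine Prod.ext ?_ hc2
          rw [h1, hc2]
    · push_neg at hj
      rw [hj]
      apply Finset.sum_eq_zero
      intro c hc
      have hc2 : c.1.2 = j := (Finset.mem_filter.mp hc).2
      rw [htneg c ?_]
      · rfl
      · rintro ⟨h1, -⟩
        rw [hc2, hj] at h1
        exact h1 rfl
  have hpwt : pwt t = hwt (Aᵀ.mulVec z) := by
    rw [pwt, hwt, psupp]
    refine Finset.card_bij' (fun (c : QA A) _ => c.1.2)
      (fun j hj => (⟨(I j, j), hI j (by simpa using hj)⟩ : QA A)) ?_ ?_ ?_ ?_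
    · intro c hc
      simp only [Finset.mem_filter, Finset.mem_univ, true_and] at hc ⊢
      by_cases h : Aᵀ.mulVec z c.1.2 ≠ 0 ∧ c.1.1 = I c.1.2
      · exact h.1
      · exact absurd (htneg c h) hc
    · intro j hj
      simp only [Finset.mem_filter, Finset.mem_univ, true_and] at hj ⊢
      rw [htpos _ ⟨hj, rfl⟩]
      decide
    · intro c hc
      simp only [Finset.mem_filter, Finset.mem_univ, true_and] at hc
      by_cases h : Aᵀ.mulVec z c.1.2 ≠ 0 ∧ c.1.1 = I c.1.2
      · apply Subtype.ext
        exact Prod.ext h.2.symm rfl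
      · exact absurd (htneg c h) hc
    · intro j hj
      rfl
  refine ⟨t - PZop A z, ?_, ?_⟩
  · apply mem_gauge_of_Z
    · intro c
      rw [Pi.sub_apply, Prod.fst_sub, ht1, PZop_fst, sub_zero]
    · intro j
      rw [map_sub, hcolt, colZ_PZop, sub_self]
  · have heq : PZop A z + (t - PZop A z) = t := by abel
    rw [heq, hpwt]

end MDWAux

/-- The minimum weight of `P^X(x)` modulo the gauge group is the Hamming weight of `Ax`;
the minimum weight of `P^Z(z)` modulo the gauge group is the Hamming weight of `Aᵀz`. -/
theorem min_dressed_weight {m : ℕ} (A : Matrix (Fin m) (Fin m) F2) :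
    (∀ x : Fin m → F2,
      sInf {w | ∃ g ∈ gaugeBS A, pwt (PXop A x + g) = w} = hwt (A.mulVec x)) ∧
    (∀ z : Fin m → F2,
      sInf {w | ∃ g ∈ gaugeBS A, pwt (PZop A z + g) = w} = hwt (Aᵀ.mulVec z)) := by
  constructor
  · intro x
    obtain ⟨g, hg, hpg⟩ := exists_witness_X A x
    have hmem : hwt (A.mulVec x) ∈ {w | ∃ g ∈ gaugeBS A, pwt (PXop A x + g) = w} :=
      ⟨g, hg, hpg⟩
    refine le_antisymm (Nat.sInf_le hmem) (le_csInf ⟨_, hmem⟩ ?_)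
    rintro w ⟨g', hg', rfl⟩
    exact lower_X A x hg'
  · intro z
    obtain ⟨g, hg, hpg⟩ := exists_witness_Z A z
    have hmem : hwt (Aᵀ.mulVec z) ∈ {w | ∃ g ∈ gaugeBS A, pwt (PZop A z + g) = w} :=
      ⟨g, hg, hpg⟩
    refine le_antisymm (Nat.sInf_le hmem) (le_csInf ⟨_, hmem⟩ ?_)
    rintro w ⟨g', hg', rfl⟩
    exact lower_Z A z hg'
end
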